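/- Let V : ℝ³ → ℝ be continuous with V(λx) = λ^s V(x) for all λ > 0 and some s > 2, and V(x) > 0 for |x| = 1, and let 𝓜 be the set of minimizers of W(x) = V(x) − (1/4) r(x)². Let γ_n → 0⁺, and suppose μ is a Borel probability measure on ℝ³ such that ∫ f(x) ρ^TF_{γ_n,1}(x) dx → ∫ f dμ for every bounded continuous f : ℝ³ → ℝ. Then μ(𝓜) = 1. -/

import Mathlib

open MeasureTheory Filter Topology

noncomputable section

/-- Three-dimensional Euclidean space. -/
abbrev E3 := EuclideanSpace ℝ (Fin 3)

/-- The distance `r(x) = √(x₁² + x₂²)` from `x` to the `x₃`-axis. -/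
def rax (x : E3) : ℝ := Real.sqrt (x 0 ^ 2 + x 1 ^ 2)

/-- The integrand of the 3D Thomas–Fermi functional:
`V ρ − (Ω²/4) r² ρ + g ρ²`. -/
def tfIntegrand (V : E3 → ℝ) (g Ω : ℝ) (ρ : E3 → ℝ) (x : E3) : ℝ :=
  V x * ρ x - Ω ^ 2 / 4 * rax x ^ 2 * ρ x + g * ρ x ^ 2

/-- Admissible densities for the 3D Thomas–Fermi problem: measurable, nonnegative,
in `L¹ ∩ L²`, with finite potential terms and unit mass. -/
def tfAdmissible (V : E3 → ℝ) (ρ : E3 → ℝ) : Prop :=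
  Measurable ρ ∧ (∀ x, 0 ≤ ρ x) ∧ Integrable ρ ∧ Integrable (fun x => ρ x ^ 2) ∧
    Integrable (fun x => V x * ρ x) ∧ Integrable (fun x => rax x ^ 2 * ρ x) ∧
    (∫ x, ρ x) = 1

/-- The 3D Thomas–Fermi energy `E^TF_{g,Ω}`. -/
def ETF (V : E3 → ℝ) (g Ω : ℝ) : ℝ :=
  sInf { e | ∃ ρ : E3 → ℝ, tfAdmissible V ρ ∧ e = ∫ x, tfIntegrand V g Ω ρ x }

/-- The candidate Thomas–Fermi minimizer with chemical potential `μ`: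
`ρ^TF_{g,Ω}(x) = (1/(2g)) [μ + (Ω²/4) r(x)² − V(x)]₊`. -/
def rhoTF (V : E3 → ℝ) (g Ω μ : ℝ) (x : E3) : ℝ :=
  1 / (2 * g) * max (μ + Ω ^ 2 / 4 * rax x ^ 2 - V x) 0

/-- Homogeneity of degree `s`: `V(λx) = λ^s V(x)` for all `λ > 0`. -/
def Homogeneous (V : E3 → ℝ) (s : ℝ) : Prop :=
  ∀ lam : ℝ, 0 < lam → ∀ x : E3, V (lam • x) = lam ^ s * V x

/-- The effective potential `W(x) = V(x) − (1/4) r(x)²`. -/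
def Wpot (V : E3 → ℝ) (x : E3) : ℝ := V x - 1 / 4 * rax x ^ 2

lemma rax_cont : Continuous rax := by
  apply Real.continuous_sqrt.comp
  exact ((EuclideanSpace.proj (0:Fin 3)).continuous.pow 2).add
    ((EuclideanSpace.proj (1:Fin 3)).continuous.pow 2)

lemma rax_nonneg (x : E3) : 0 ≤ rax x := Real.sqrt_nonneg _

lemma rax_le_norm (x : E3) : rax x ≤ ‖x‖ := by
  rw [EuclideanSpace.norm_eq]
  apply Real.sqrt_le_sqrt
  have : ∑ i : Fin 3, ‖x i‖ ^ 2 = x 0 ^ 2 + x 1 ^ 2 + x 2 ^ 2 := by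
    simp [Fin.sum_univ_three, sq_abs]
  rw [this]
  nlinarith [sq_nonneg (x 2)]

lemma rax_sq_le (x : E3) : rax x ^ 2 ≤ ‖x‖ ^ 2 := by
  have h := rax_le_norm x
  nlinarith [rax_nonneg x, norm_nonneg x]

lemma wpot_cont (V : E3 → ℝ) (hVc : Continuous V) : Continuous (Wpot V) :=
  hVc.sub (continuous_const.mul (rax_cont.pow 2))

lemma wpot_zero (V : E3 → ℝ) (s : ℝ) (hs : 2 < s) (hhom : Homogeneous V s) :
    Wpot V 0 = 0 := by
  have h := hhom 2 (by norm_num) 0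
  rw [smul_zero] at h
  have h2 : (1:ℝ) < (2:ℝ) ^ s :=
    (Real.one_lt_rpow_iff_of_pos (by norm_num)).mpr (Or.inl ⟨by norm_num, by linarith⟩)
  have hV0 : V 0 = 0 := by nlinarith
  have : rax 0 = 0 := by
    unfold rax
    norm_num
  simp [Wpot, hV0, this]

lemma wpot_min_exists (V : E3 → ℝ) (hVc : Continuous V)
    (s : ℝ) (hs : 2 < s) (hhom : Homogeneous V s)
    (hVpos : ∀ x : E3, ‖x‖ = 1 → 0 < V x) :
    ∃ x₀ : E3, ∀ y : E3, Wpot V x₀ ≤ Wpot V y := by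
  -- min of V on the sphere
  obtain ⟨u0, hu0, hu0min⟩ := (isCompact_sphere (0:E3) 1).exists_isMinOn
    (NormedSpace.sphere_nonempty.mpr zero_le_one) hVc.continuousOn
  have hu0norm : ‖u0‖ = 1 := by rwa [mem_sphere_zero_iff_norm] at hu0
  set v0 := V u0 with hv0def
  have hv0 : 0 < v0 := hVpos u0 hu0norm
  -- lower bound for W for ‖x‖ large
  set T : ℝ := (1 / (2 * v0)) ^ (s - 2)⁻¹ with hTdef
  set R : ℝ := max 1 T with hRdef
  have hR1 : (1:ℝ) ≤ R := le_max_left _ _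
  have hbig : ∀ x : E3, R < ‖x‖ → 0 < Wpot V x := by
    intro x hx
    have hxn : (0:ℝ) < ‖x‖ := by linarith
    set u : E3 := ‖x‖⁻¹ • x with hudef
    have hun : ‖u‖ = 1 := by
      rw [hudef, norm_smul, norm_inv, norm_norm, inv_mul_cancel₀ (ne_of_gt hxn)]
    have hVx : V x = ‖x‖ ^ s * V u := by
      have := hhom ‖x‖ hxn u
      rwa [hudef, smul_smul, mul_inv_cancel₀ (ne_of_gt hxn), one_smul] at this
    have hVu : v0 ≤ V u := hu0min (by rwa [mem_sphere_zero_iff_norm])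
    have hrax : rax x ^ 2 ≤ ‖x‖ ^ 2 := rax_sq_le x
    set a : ℝ := ‖x‖ ^ (s - 2) with hadef
    have ha : 0 < a := Real.rpow_pos_of_pos hxn _
    -- ‖x‖ ^ s = ‖x‖ ^ 2 * a
    have hsplit : ‖x‖ ^ s = ‖x‖ ^ (2:ℕ) * a := by
      rw [hadef, ← Real.rpow_natCast ‖x‖ 2, ← Real.rpow_add hxn]
      norm_num
    have hT : (1 / (2 * v0)) < a := by
      have hTlt : T < ‖x‖ := lt_of_le_of_lt (le_max_right 1 T) hx
      have hTnn : 0 ≤ T := Real.rpow_nonneg (by positivity) _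
      have := Real.rpow_lt_rpow hTnn hTlt (by linarith : (0:ℝ) < s - 2)
      rwa [hTdef, Real.rpow_inv_rpow (by positivity) (by linarith : s - 2 ≠ 0)] at this
    have hkey : (1:ℝ)/2 < a * v0 := by
      have := (div_lt_iff₀ (by positivity : (0:ℝ) < 2 * v0)).mp hT
      nlinarith
    have hx2 : (0:ℝ) < ‖x‖ ^ (2:ℕ) := by positivity
    have hWx : Wpot V x = ‖x‖ ^ (2:ℕ) * a * V u - 1 / 4 * rax x ^ 2 := by
      unfold Wpot
      rw [hVx, hsplit]
    rw [hWx]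
    have h1 : ‖x‖ ^ (2:ℕ) * a * v0 ≤ ‖x‖ ^ (2:ℕ) * a * V u :=
      mul_le_mul_of_nonneg_left hVu (by positivity)
    have h2 : rax x ^ 2 ≤ ‖x‖ ^ (2:ℕ) := by
      simpa using hrax
    nlinarith
  -- min on the closed ball
  obtain ⟨x₀, hx₀mem, hx₀min⟩ := (isCompact_closedBall (0:E3) R).exists_isMinOn
    ⟨0, by simpa [Metric.mem_closedBall] using (by linarith : (0:ℝ) ≤ R)⟩
    (wpot_cont V hVc).continuousOn
  refine ⟨x₀, fun y => ?_⟩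
  by_cases hy : y ∈ Metric.closedBall (0:E3) R
  · exact hx₀min hy
  · have hRy : R < ‖y‖ := by
      simpa [Metric.mem_closedBall, dist_zero_right, not_le] using hy
    have h0 : Wpot V x₀ ≤ Wpot V 0 :=
      hx₀min (by simpa [Metric.mem_closedBall] using (by linarith : (0:ℝ) ≤ R))
    rw [wpot_zero V s hs hhom] at h0
    exact le_of_lt (lt_of_le_of_lt h0 (hbig y hRy))

/-- **Concentration of the Thomas–Fermi densities on the minimizing set `𝓜` of
`W = V − r²/4` in the ultrarapid-rotation limit**: if `γ_n → 0⁺` and the normalized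
minimizers `ρ^TF_{γ_n,1}` converge weakly (against bounded continuous functions) to a
Borel probability measure `μ`, then `μ(𝓜) = 1`. -/
theorem tf3_density_concentration (V : E3 → ℝ) (hVc : Continuous V)
    (s : ℝ) (hs : 2 < s) (hhom : Homogeneous V s)
    (hVpos : ∀ x : E3, ‖x‖ = 1 → 0 < V x)
    (γ : ℕ → ℝ) (hγpos : ∀ n, 0 < γ n) (hγ0 : Tendsto γ atTop (𝓝 0))
    (c : ℕ → ℝ) (hc : ∀ n, (∫ x, rhoTF V (γ n) 1 (c n) x) = 1)
    (μ : Measure E3) [IsProbabilityMeasure μ]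
    (hweak : ∀ f : E3 → ℝ, Continuous f → (∃ C : ℝ, ∀ x, |f x| ≤ C) →
      Tendsto (fun n => ∫ x, f x * rhoTF V (γ n) 1 (c n) x) atTop (𝓝 (∫ x, f x ∂μ))) :
    μ {x : E3 | ∀ y : E3, Wpot V x ≤ Wpot V y} = 1 := by
  obtain ⟨x₀, hx₀⟩ := wpot_min_exists V hVc s hs hhom hVpos
  have hWc : Continuous (Wpot V) := wpot_cont V hVc
  set m := Wpot V x₀ with hm
  -- rewrite the density in terms of W
  have hrho : ∀ n x, rhoTF V (γ n) 1 (c n) x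
      = 1 / (2 * γ n) * max (c n - Wpot V x) 0 := by
    intro n x
    have h : c n + (1:ℝ) ^ 2 / 4 * rax x ^ 2 - V x = c n - Wpot V x := by
      unfold Wpot; ring
    rw [rhoTF, h]
  set g : ℕ → E3 → ℝ := fun n x => max (c n - Wpot V x) 0 with hgdef
  have hgnonneg : ∀ n x, 0 ≤ g n x := fun n x => le_max_right _ _
  have hgint_eq : ∀ n, (∫ x, g n x) = 2 * γ n := by
    intro n
    have h := hc n
    simp_rw [hrho n] at h
    rw [integral_const_mul] at h
    have hγ := hγpos n
    field_simp at h
    linarith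
  have hgint : ∀ n, Integrable (g n) := by
    intro n
    by_contra hni
    have h0 := integral_undef hni
    have h1 := hgint_eq n
    rw [h0] at h1
    have := hγpos n
    linarith
  -- eventual bound on the chemical potentials
  have hcbound : ∀ δ : ℝ, 0 < δ → ∀ᶠ n in atTop, c n < m + δ := by
    intro δ hδ
    have hopen : IsOpen {x : E3 | Wpot V x < m + δ / 2} :=
      isOpen_lt hWc continuous_const
    have hx₀mem : x₀ ∈ {x : E3 | Wpot V x < m + δ / 2} := by
      simp only [Set.mem_setOf_eq]; linarith
    obtain ⟨t, ht, hball⟩ := Metric.isOpen_iff.mp hopen x₀ hx₀mem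
    set v := (volume (Metric.ball x₀ t)).toReal with hvdef
    have hv : 0 < v := by
      refine ENNReal.toReal_pos ?_ ?_
      · exact (Metric.measure_ball_pos _ _ ht).ne'
      · exact measure_ball_lt_top.ne
    have hev : ∀ᶠ n in atTop, γ n < δ / 2 * v / 2 :=
      hγ0.eventually_lt_const (by positivity)
    filter_upwards [hev] with n hn
    by_contra hcn
    push_neg at hcn
    have hlow : ∀ x ∈ Metric.ball x₀ t, δ / 2 ≤ g n x := by
      intro x hx
      have hWx := hball hx
      simp only [Set.mem_setOf_eq] at hWx
      have : δ / 2 ≤ c n - Wpot V x := by linarith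
      exact le_trans this (le_max_left _ _)
    have h1 : δ / 2 * v ≤ ∫ x in Metric.ball x₀ t, g n x :=
      setIntegral_ge_of_const_le_real measurableSet_ball measure_ball_lt_top.ne hlow
        ((hgint n).integrableOn)
    have h2 : (∫ x in Metric.ball x₀ t, g n x) ≤ ∫ x, g n x :=
      setIntegral_le_integral (hgint n) (Filter.Eventually.of_forall (hgnonneg n))
    rw [hgint_eq n] at h2
    linarith
  -- the measure of the superlevel sets vanishes
  have hkey : ∀ ε : ℝ, 0 < ε → μ {x : E3 | m + ε ≤ Wpot V x} = 0 := by
    intro ε hε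
    set f : E3 → ℝ := fun x => min (max ((2 / ε) * (Wpot V x - (m + ε / 2))) 0) 1
      with hfdef
    have hfc : Continuous f :=
      ((continuous_const.mul (hWc.sub continuous_const)).max continuous_const).min
        continuous_const
    have hf01 : ∀ x, 0 ≤ f x ∧ f x ≤ 1 := fun x =>
      ⟨le_min (le_max_right _ _) zero_le_one, min_le_right _ _⟩
    have hfbd : ∀ x, |f x| ≤ 1 := fun x =>
      abs_le.mpr ⟨by linarith [(hf01 x).1], (hf01 x).2⟩
    have hlim := hweak f hfc ⟨1, hfbd⟩
    have hev0 : ∀ᶠ n in atTop, (∫ x, f x * rhoTF V (γ n) 1 (c n) x) = 0 := by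
      filter_upwards [hcbound (ε / 2) (by positivity)] with n hn
      have : ∀ x, f x * rhoTF V (γ n) 1 (c n) x = 0 := by
        intro x
        rcases le_or_gt (c n) (Wpot V x) with h | h
        · have : rhoTF V (γ n) 1 (c n) x = 0 := by
            rw [hrho n x, max_eq_right (by linarith), mul_zero]
          rw [this, mul_zero]
        · have hfx : f x = 0 := by
            have h1 : (2 / ε) * (Wpot V x - (m + ε / 2)) ≤ 0 := by
              apply mul_nonpos_of_nonneg_of_nonpos (by positivity)
              linarith
            rw [hfdef]
            simp only
            rw [max_eq_right h1, min_eq_left zero_le_one]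
          rw [hfx, zero_mul]
      simp [this]
    have hlim0 : Tendsto (fun n => ∫ x, f x * rhoTF V (γ n) 1 (c n) x) atTop (𝓝 0) :=
      Tendsto.congr' (Filter.EventuallyEq.symm hev0) tendsto_const_nhds
    have hint0 : (∫ x, f x ∂μ) = 0 := tendsto_nhds_unique hlim hlim0
    set S := {x : E3 | m + ε ≤ Wpot V x} with hSdef
    have hSmeas : MeasurableSet S := measurableSet_le measurable_const hWc.measurable
    have hfint : Integrable f μ := by
      refine (integrable_const (1:ℝ)).mono' hfc.aestronglyMeasurable ?_
      filter_upwards with x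
      rw [Real.norm_eq_abs]
      exact hfbd x
    have hone : (μ S).toReal ≤ ∫ x, f x ∂μ := by
      have heq : (μ S).toReal = ∫ _ in S, (1:ℝ) ∂μ := by
        rw [setIntegral_const]; simp; rfl
      rw [heq]
      have hstep : (∫ _ in S, (1:ℝ) ∂μ) ≤ ∫ x in S, f x ∂μ := by
        refine setIntegral_mono_on ((integrableOn_const_iff (C := (1:ℝ))).mpr ?_) hfint.integrableOn
          hSmeas ?_
        · exact Or.inr (measure_lt_top μ S)
        · intro x hx
          have hx' : m + ε ≤ Wpot V x := hx
          have : (1:ℝ) ≤ (2 / ε) * (Wpot V x - (m + ε / 2)) := by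
            rw [show (1:ℝ) = (2/ε) * (ε/2) by field_simp]
            apply mul_le_mul_of_nonneg_left _ (by positivity)
            linarith
          have hmax : max ((2 / ε) * (Wpot V x - (m + ε / 2))) 0 ≥ 1 :=
            le_trans this (le_max_left _ _)
          rw [hfdef]
          simp only
          rw [min_eq_right (by linarith)]
      calc (∫ _ in S, (1:ℝ) ∂μ) ≤ ∫ x in S, f x ∂μ := hstep
        _ ≤ ∫ x, f x ∂μ :=
          setIntegral_le_integral hfint (Filter.Eventually.of_forall fun x => (hf01 x).1)
    rw [hint0] at hone
    have : (μ S).toReal = 0 := le_antisymm hone ENNReal.toReal_nonneg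
    exact (ENNReal.toReal_eq_zero_iff _).mp this |>.resolve_right (measure_ne_top μ S)
  -- identify the minimizing set and conclude
  have hsetEq : {x : E3 | ∀ y : E3, Wpot V x ≤ Wpot V y} = {x : E3 | Wpot V x ≤ m} := by
    ext x
    constructor
    · intro hx; exact hx x₀
    · intro hx y; exact le_trans hx (hx₀ y)
  rw [hsetEq]
  have hMmeas : MeasurableSet {x : E3 | Wpot V x ≤ m} :=
    measurableSet_le hWc.measurable measurable_const
  rw [← prob_compl_eq_zero_iff hMmeas]
  have hsub : {x : E3 | Wpot V x ≤ m}ᶜ ⊆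
      ⋃ k : ℕ, {x : E3 | m + 1 / ((k:ℝ) + 1) ≤ Wpot V x} := by
    intro x hx
    simp only [Set.mem_compl_iff, Set.mem_setOf_eq, not_le] at hx
    obtain ⟨k, hk⟩ := exists_nat_one_div_lt (show (0:ℝ) < Wpot V x - m by linarith)
    exact Set.mem_iUnion.mpr ⟨k, by simp only [Set.mem_setOf_eq]; linarith⟩
  refine measure_mono_null hsub (measure_iUnion_null fun k => hkey _ ?_)
  positivity
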